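/- Let f(x,y,u,z,w) = −w³xy − 2u²w²z + w²x²z + w²y²z − wxyz² + u²z³, and let G be the subset of ℙ(ℂ³) × ℙ(ℂ²) × ℙ(ℂ²) × ℙ(ℂ²) consisting of all points ([x:y:u], [z:w], [x:y], [z:w]) with f(x,y,u,z,w) = 0 and (x,y) ≠ (0,0) (the graph of φ: [x:y:u:z:w] ↦ [x:y:z:w] on its domain of definition). Then for every (a,b) ∈ ℂ² with (a,b) ≠ (0,0), the point ([0:0:1], [0:1], [a:b], [0:1]) lies in the topological closure of G. -/

import Mathlib

open Projectivization Filter Topology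
open scoped LinearAlgebra.Projectivization

/-- The quotient topology on a projectivization, induced from the subspace of
nonzero vectors. -/
noncomputable instance (n : ℕ) : TopologicalSpace (ℙ ℂ (Fin n → ℂ)) :=
  inferInstanceAs (TopologicalSpace (Quotient (projectivizationSetoid ℂ (Fin n → ℂ))))

/-- The defining polynomial of the projective model `S` of the canonical component. -/
def whiteheadProjF (x y u z w : ℂ) : ℂ :=
  -w^3*x*y - 2*u^2*w^2*z + w^2*x^2*z + w^2*y^2*z - w*x*y*z^2 + u^2*z^3

/-- The graph of `φ : [x:y:u:z:w] ↦ [x:y:z:w]` on its domain of definition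
`{(x,y) ≠ (0,0)}`, inside `ℙ(ℂ³) × ℙ(ℂ²) × ℙ(ℂ²) × ℙ(ℂ²)`. -/
def whiteheadGraph :
    Set (ℙ ℂ (Fin 3 → ℂ) × ℙ ℂ (Fin 2 → ℂ) × ℙ ℂ (Fin 2 → ℂ) × ℙ ℂ (Fin 2 → ℂ)) :=
  {p | ∃ (x y u z w : ℂ) (h₁ : ![x, y, u] ≠ 0) (h₂ : ![z, w] ≠ 0) (h₃ : ![x, y] ≠ 0),
    whiteheadProjF x y u z w = 0 ∧ (x, y) ≠ (0, 0) ∧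
    p = (Projectivization.mk ℂ ![x, y, u] h₁, Projectivization.mk ℂ ![z, w] h₂,
         Projectivization.mk ℂ ![x, y] h₃, Projectivization.mk ℂ ![z, w] h₂)}

lemma tendsto_projmk {m : ℕ} {f : ℕ → Fin m → ℂ} (hf : ∀ k, f k ≠ 0)
    {v : Fin m → ℂ} (hv : v ≠ 0) (h : Tendsto f atTop (𝓝 v)) :
    Tendsto (fun k => Projectivization.mk ℂ (f k) (hf k)) atTop
      (𝓝 (Projectivization.mk ℂ v hv)) := by
  have hs : Tendsto (fun k => (⟨f k, hf k⟩ : {w : Fin m → ℂ // w ≠ 0})) atTop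
      (𝓝 ⟨v, hv⟩) := tendsto_subtype_rng.2 h
  exact ((continuous_quotient_mk').tendsto _).comp hs

lemma vec2_ne (c d : ℂ) (h : c ≠ 0 ∨ d ≠ 0) : ![c, d] ≠ 0 := by
  intro hc
  rcases h with h | h
  · exact h (by simpa using congrFun hc 0)
  · exact h (by simpa using congrFun hc 1)

lemma vec3_ne (c d e : ℂ) (h : c ≠ 0 ∨ d ≠ 0 ∨ e ≠ 0) : ![c, d, e] ≠ 0 := by
  intro hc
  rcases h with h | h | h
  · exact h (by simpa using congrFun hc 0)
  · exact h (by simpa using congrFun hc 1)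
  · exact h (by simpa using congrFun hc 2)

theorem total_transform_of_fundamental_point (a b : ℂ) (hab : (a, b) ≠ (0, 0)) :
    (Projectivization.mk ℂ ![(0 : ℂ), 0, 1]
        (by intro h; simpa using congrFun h 2),
     Projectivization.mk ℂ ![(0 : ℂ), 1]
        (by intro h; simpa using congrFun h 1),
     Projectivization.mk ℂ ![a, b]
        (by intro h; apply hab; exact Prod.ext (by simpa using congrFun h 0) (by simpa using congrFun h 1)),
     Projectivization.mk ℂ ![(0 : ℂ), 1]
        (by intro h; simpa using congrFun h 1)) ∈ closure whiteheadGraph := by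
  classical
  have hor : a ≠ 0 ∨ b ≠ 0 := by
    by_contra h
    push_neg at h
    exact hab (by simp [h.1, h.2])
  set T : ℕ → ℂ := fun n => ((1 / (n + 1 : ℝ) : ℝ) : ℂ) with hTdef
  have hTne : ∀ n, T n ≠ 0 := by
    intro n
    simp only [hTdef, ne_eq, Complex.ofReal_eq_zero]
    positivity
  have hT0 : Tendsto T atTop (𝓝 0) := by
    rw [hTdef, show (0 : ℂ) = ((0 : ℝ) : ℂ) by norm_num]
    exact (Complex.continuous_ofReal.tendsto _).comp
      tendsto_one_div_add_atTop_nhds_zero_nat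
  have hTle : ∀ n, ‖T n‖ ≤ 1 := by
    intro n
    simp only [hTdef, Complex.norm_real, Real.norm_eq_abs]
    rw [abs_of_pos (by positivity), div_le_one (by positivity)]
    linarith [Nat.cast_nonneg (α := ℝ) n]
  have hTd : ∀ n, T n ^ 4 - 2 ≠ 0 := by
    intro n h
    have h2 : T n ^ 4 = 2 := by linear_combination h
    have hle : ‖T n ^ 4‖ ≤ 1 := by
      rw [norm_pow]
      exact pow_le_one₀ (norm_nonneg _) (hTle n)
    rw [h2] at hle
    norm_num at hle
  have pairne : ∀ n, (T n * a, T n * b) ≠ ((0 : ℂ), (0 : ℂ)) := by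
    intro n hc
    apply hab
    rw [Prod.mk.injEq] at hc ⊢
    exact ⟨(mul_eq_zero.1 hc.1).resolve_left (hTne n),
      (mul_eq_zero.1 hc.2).resolve_left (hTne n)⟩
  have h3 : ∀ n, ![T n * a, T n * b] ≠ 0 := fun n =>
    vec2_ne _ _ (hor.imp (fun h => mul_ne_zero (hTne n) h) (fun h => mul_ne_zero (hTne n) h))
  have habne : ![a, b] ≠ 0 := vec2_ne _ _ hor
  have h01 : ![(0 : ℂ), 1] ≠ 0 := vec2_ne _ _ (Or.inr one_ne_zero)
  have h001 : ![(0 : ℂ), 0, 1] ≠ 0 := vec3_ne _ _ _ (Or.inr (Or.inr one_ne_zero))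
  have hthird : ∀ n (h : ![T n * a, T n * b] ≠ 0),
      Projectivization.mk ℂ ![T n * a, T n * b] h = Projectivization.mk ℂ ![a, b] habne := by
    intro n h
    rw [Projectivization.mk_eq_mk_iff']
    exact ⟨T n, by funext i; fin_cases i <;> simp⟩
  by_cases hab0 : a * b = 0
  · -- path: x = ta, y = tb, u = 1, z = 0, w = 1
    have h1 : ∀ n, ![T n * a, T n * b, (1 : ℂ)] ≠ 0 := fun n =>
      vec3_ne _ _ _ (Or.inr (Or.inr one_ne_zero))
    have htend : Tendsto (fun n =>
        (Projectivization.mk ℂ ![T n * a, T n * b, 1] (h1 n),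
         Projectivization.mk ℂ ![(0 : ℂ), 1] h01,
         Projectivization.mk ℂ ![T n * a, T n * b] (h3 n),
         Projectivization.mk ℂ ![(0 : ℂ), 1] h01)) atTop
        (𝓝 (Projectivization.mk ℂ ![(0 : ℂ), 0, 1] h001,
            Projectivization.mk ℂ ![(0 : ℂ), 1] h01,
            Projectivization.mk ℂ ![a, b] habne,
            Projectivization.mk ℂ ![(0 : ℂ), 1] h01)) := by
      refine Tendsto.prodMk_nhds ?_ (Tendsto.prodMk_nhds tendsto_const_nhds
        (Tendsto.prodMk_nhds ?_ tendsto_const_nhds))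
      · refine tendsto_projmk _ h001 ?_
        rw [tendsto_pi_nhds]
        intro i
        fin_cases i
        · simpa using hT0.mul_const a
        · simpa using hT0.mul_const b
        · exact tendsto_const_nhds
      · exact tendsto_const_nhds.congr (fun n => (hthird n (h3 n)).symm)
    refine mem_closure_of_tendsto htend ?_
    filter_upwards with n
    refine ⟨T n * a, T n * b, 1, 0, 1, h1 n, h01, h3 n, ?_, pairne n, rfl⟩
    simp only [whiteheadProjF]
    linear_combination (-(T n ^ 2)) * hab0
  · -- path: x = ta, y = tb, z = t², w = 1, u² = (ab(1+t⁴) - t²(a²+b²))/(t⁴-2)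
    set v : ℕ → ℂ := fun n =>
      (a * b * (1 + T n ^ 4) - T n ^ 2 * (a ^ 2 + b ^ 2)) / (T n ^ 4 - 2) with hvdef
    have hex : ∀ n, ∃ u : ℂ, u ^ 2 = v n := fun n =>
      IsAlgClosed.exists_pow_nat_eq (v n) (by norm_num)
    set u : ℕ → ℂ := fun n => (hex n).choose with hudef
    have hu : ∀ n, u n ^ 2 = v n := fun n => (hex n).choose_spec
    have h4 : Tendsto (fun n => T n ^ 4) atTop (𝓝 0) := by
      simpa using hT0.pow 4
    have h2t : Tendsto (fun n => T n ^ 2) atTop (𝓝 0) := by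
      simpa using hT0.pow 2
    have hvlim : Tendsto v atTop (𝓝 (a * b / (-2))) := by
      have hnum : Tendsto (fun n => a * b * (1 + T n ^ 4) - T n ^ 2 * (a ^ 2 + b ^ 2))
          atTop (𝓝 (a * b)) := by
        have hA : Tendsto (fun n => a * b * (1 + T n ^ 4)) atTop (𝓝 (a * b * (1 + 0))) :=
          (tendsto_const_nhds (x := a * b)).mul ((tendsto_const_nhds (x := (1 : ℂ))).add h4)
        have hB : Tendsto (fun n => T n ^ 2 * (a ^ 2 + b ^ 2)) atTop (𝓝 (0 * (a ^ 2 + b ^ 2))) :=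
          h2t.mul tendsto_const_nhds
        simpa using hA.sub hB
      have hden : Tendsto (fun n => T n ^ 4 - 2) atTop (𝓝 (-2)) := by
        have := h4.sub (tendsto_const_nhds (x := (2 : ℂ)))
        simpa using this
      exact hnum.div hden (by norm_num)
    set L : ℝ := ‖a * b‖ / 2 with hLdef
    have hL : 0 < L := by
      have h' : 0 < ‖a * b‖ := norm_pos_iff.mpr hab0
      simp only [hLdef]
      linarith
    have hvnorm : Tendsto (fun n => ‖v n‖) atTop (𝓝 L) := by
      have := hvlim.norm
      simpa [hLdef, norm_div] using this
    have hev : ∀ᶠ n in atTop, L / 2 < ‖v n‖ :=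
      hvnorm.eventually (eventually_gt_nhds (by linarith))
    set c : ℝ := Real.sqrt (L / 2) with hcdef
    have hc : 0 < c := Real.sqrt_pos.2 (by linarith)
    have huev : ∀ᶠ n in atTop, c ≤ ‖u n‖ := by
      filter_upwards [hev] with n hn
      have hun : ‖u n‖ = Real.sqrt ‖v n‖ := by
        rw [← hu n, norm_pow, Real.sqrt_sq_eq_abs, abs_of_nonneg (norm_nonneg _)]
      rw [hun, hcdef]
      exact Real.sqrt_le_sqrt (le_of_lt hn)
    have hune : ∀ᶠ n in atTop, u n ≠ 0 := by
      filter_upwards [huev] with n hn h0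
      rw [h0] at hn
      simp only [norm_zero] at hn
      linarith
    have hdiv : ∀ (e : ℂ), Tendsto (fun n => T n * e / u n) atTop (𝓝 0) := by
      intro e
      refine squeeze_zero_norm' (a := fun n => ‖T n‖ * ‖e‖ / c) ?_ ?_
      · filter_upwards [huev] with n hn
        rw [norm_div, norm_mul]
        exact div_le_div_of_nonneg_left (by positivity) hc hn
      · have := (hT0.norm.mul_const ‖e‖).div_const c
        simpa using this
    have h1 : ∀ n, ![T n * a, T n * b, u n] ≠ 0 := fun n =>
      vec3_ne _ _ _ (hor.imp (fun h => mul_ne_zero (hTne n) h)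
        (fun h => Or.inl (mul_ne_zero (hTne n) h)))
    have hB1 : ∀ n, ![T n * a / u n, T n * b / u n, (1 : ℂ)] ≠ 0 := fun n =>
      vec3_ne _ _ _ (Or.inr (Or.inr one_ne_zero))
    have hBtend : Tendsto (fun n => Projectivization.mk ℂ
        ![T n * a / u n, T n * b / u n, 1] (hB1 n)) atTop
        (𝓝 (Projectivization.mk ℂ ![(0 : ℂ), 0, 1] h001)) := by
      refine tendsto_projmk _ h001 ?_
      rw [tendsto_pi_nhds]
      intro i
      fin_cases i
      · simpa using hdiv a
      · simpa using hdiv b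
      · simp only [Matrix.cons_val_two, Matrix.tail_cons, Matrix.head_cons]
        exact tendsto_const_nhds
    have hAB : ∀ᶠ n in atTop,
        Projectivization.mk ℂ ![T n * a / u n, T n * b / u n, 1] (hB1 n)
          = Projectivization.mk ℂ ![T n * a, T n * b, u n] (h1 n) := by
      filter_upwards [hune] with n hn
      rw [eq_comm, Projectivization.mk_eq_mk_iff']
      refine ⟨u n, ?_⟩
      funext i
      fin_cases i <;> simp <;> field_simp
    have hAtend : Tendsto (fun n => Projectivization.mk ℂ
        ![T n * a, T n * b, u n] (h1 n)) atTop
        (𝓝 (Projectivization.mk ℂ ![(0 : ℂ), 0, 1] h001)) :=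
      hBtend.congr' hAB
    have hz1 : ∀ n, ![T n ^ 2, (1 : ℂ)] ≠ 0 := fun n =>
      vec2_ne _ _ (Or.inr one_ne_zero)
    have hztend : Tendsto (fun n => Projectivization.mk ℂ ![T n ^ 2, 1] (hz1 n)) atTop
        (𝓝 (Projectivization.mk ℂ ![(0 : ℂ), 1] h01)) := by
      refine tendsto_projmk _ h01 ?_
      rw [tendsto_pi_nhds]
      intro i
      fin_cases i
      · simpa using h2t
      · simp only [Matrix.cons_val_two, Matrix.tail_cons, Matrix.head_cons]
        exact tendsto_const_nhds
    have htend : Tendsto (fun n =>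
        (Projectivization.mk ℂ ![T n * a, T n * b, u n] (h1 n),
         Projectivization.mk ℂ ![T n ^ 2, 1] (hz1 n),
         Projectivization.mk ℂ ![T n * a, T n * b] (h3 n),
         Projectivization.mk ℂ ![T n ^ 2, 1] (hz1 n))) atTop
        (𝓝 (Projectivization.mk ℂ ![(0 : ℂ), 0, 1] h001,
            Projectivization.mk ℂ ![(0 : ℂ), 1] h01,
            Projectivization.mk ℂ ![a, b] habne,
            Projectivization.mk ℂ ![(0 : ℂ), 1] h01)) :=
      hAtend.prodMk_nhds (hztend.prodMk_nhds
        ((tendsto_const_nhds.congr (fun n => (hthird n (h3 n)).symm)).prodMk_nhds hztend))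
    refine mem_closure_of_tendsto htend ?_
    filter_upwards with n
    refine ⟨T n * a, T n * b, u n, T n ^ 2, 1, h1 n, hz1 n, h3 n, ?_, pairne n, rfl⟩
    have key : u n ^ 2 * (T n ^ 4 - 2)
        = a * b * (1 + T n ^ 4) - T n ^ 2 * (a ^ 2 + b ^ 2) := by
      rw [hu n]
      simp only [hvdef]
      exact div_mul_cancel₀ _ (hTd n)
    simp only [whiteheadProjF]
    linear_combination (T n ^ 2) * key
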